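/- Let X be a Banach space and let A and B be closed injective linear operators in X. Let S be a densely defined linear operator in X with R(S) ⊆ D(A) ∩ D(B), such that (A+B)Sx = x for all x ∈ D(S), such that at least one of AS, BS admits a bounded extension in L(X), and such that S commutes with the resolvents of A and of B (for λ ∈ ρ(A), μ ∈ ρ(B), x ∈ D(S): R(λ,A)x, R(μ,B)x ∈ D(S), S R(λ,A)x = R(λ,A)Sx, S R(μ,B)x = R(μ,B)Sx). Suppose there exists λ ∈ ℂ with λ ∈ ρ(A) and −λ ∈ ρ(B) such that the set R(λ,A)(λ+B)^{-1}(D(\overline{S})) is a core for A + B. Then A + B with domain D(A) ∩ D(B) is closed and injective and \overline{S} = (A+B)^{-1}, i.e. D(\overline{S}) = R(A+B) and \overline{S}(A+B)x = x for all x ∈ D(A) ∩ D(B) and (A+B)\overline{S}y = y for all y ∈ D(\overline{S}). -/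

import Mathlib

/- STATEMENT 2: Lemma 2 of the paper, second case (core hypothesis).
Unbounded operators in a Banach space `X` are formalized as `LinearPMap`s `X →ₗ.[ℂ] X`.
`IsResolvent A lam R` expresses `λ ∈ ρ(A)` with `R = (λ - A)⁻¹ ∈ L(X)`;
`IsPlusInv B lam R` expresses `-λ ∈ ρ(B)` with `R = (λ + B)⁻¹ ∈ L(X)`. -/

/-- `R ∈ L(X)` is the resolvent `(lam - A)⁻¹` of the unbounded operator `A`. -/
structure IsResolvent {X : Type*} [NormedAddCommGroup X] [NormedSpace ℂ X]
    (A : X →ₗ.[ℂ] X) (lam : ℂ) (R : X →L[ℂ] X) : Prop where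
  mem : ∀ x : X, R x ∈ A.domain
  right_inv : ∀ x : X, lam • R x - A ⟨R x, mem x⟩ = x
  left_inv : ∀ y : A.domain, R (lam • (y : X) - A y) = (y : X)

/-- `R ∈ L(X)` is the bounded inverse `(lam + B)⁻¹` of `lam + B` (equivalently, `-lam ∈ ρ(B)`). -/
structure IsPlusInv {X : Type*} [NormedAddCommGroup X] [NormedSpace ℂ X]
    (B : X →ₗ.[ℂ] X) (lam : ℂ) (R : X →L[ℂ] X) : Prop where
  mem : ∀ x : X, R x ∈ B.domain
  right_inv : ∀ x : X, lam • R x + B ⟨R x, mem x⟩ = x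
  left_inv : ∀ y : B.domain, R (lam • (y : X) + B y) = (y : X)

theorem stmt_2 {X : Type*} [NormedAddCommGroup X] [NormedSpace ℂ X] [CompleteSpace X]
    (A B S : X →ₗ.[ℂ] X)
    (hAclosed : A.IsClosed) (hBclosed : B.IsClosed)
    (hAinj : ∀ x : A.domain, A x = 0 → (x : X) = 0)
    (hBinj : ∀ x : B.domain, B x = 0 → (x : X) = 0)
    -- S is densely defined, R(S) ⊆ D(A) ∩ D(B), (A+B)Sx = x on D(S)
    (hSdense : Dense (S.domain : Set X))
    (hSA : ∀ x : S.domain, S x ∈ A.domain)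
    (hSB : ∀ x : S.domain, S x ∈ B.domain)
    (hABS : ∀ x : S.domain, A ⟨S x, hSA x⟩ + B ⟨S x, hSB x⟩ = (x : X))
    -- at least one of AS, BS admits a bounded extension
    (hbdd : (∃ T : X →L[ℂ] X, ∀ x : S.domain, T (x : X) = A ⟨S x, hSA x⟩) ∨
            (∃ T : X →L[ℂ] X, ∀ x : S.domain, T (x : X) = B ⟨S x, hSB x⟩))
    -- S commutes with the resolvents of A and of B
    (hScommA : ∀ (lam : ℂ) (R : X →L[ℂ] X), IsResolvent A lam R →
      ∀ x : S.domain, ∃ h : R (x : X) ∈ S.domain, S ⟨R (x : X), h⟩ = R (S x))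
    (hScommB : ∀ (mu : ℂ) (R : X →L[ℂ] X), IsResolvent B mu R →
      ∀ x : S.domain, ∃ h : R (x : X) ∈ S.domain, S ⟨R (x : X), h⟩ = R (S x))
    -- there is λ ∈ ρ(A) with −λ ∈ ρ(B) such that R(λ,A)(λ+B)⁻¹(D(S̄)) is a core for A+B
    (lam : ℂ) (RA RB : X →L[ℂ] X)
    (hRA : IsResolvent A lam RA) (hRB : IsPlusInv B lam RB)
    (hcore : ∀ x : (A + B).domain, ∃ u : ℕ → (A + B).domain,
      (∀ n, (u n : X) ∈ (fun y => RA (RB y)) '' (S.closure.domain : Set X)) ∧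
      Filter.Tendsto (fun n => ((u n : X))) Filter.atTop (nhds (x : X)) ∧
      Filter.Tendsto (fun n => (A + B) (u n)) Filter.atTop (nhds ((A + B) x))) :
    -- S is closable, A + B (with domain D(A) ∩ D(B)) is closed and injective,
    S.IsClosable ∧
    (A + B).IsClosed ∧
    (∀ x : (A + B).domain, (A + B) x = 0 → (x : X) = 0) ∧
    -- and S̄ = (A+B)⁻¹: D(S̄) = R(A+B),
    ((S.closure.domain : Set X) = Set.range (fun x : (A + B).domain => (A + B) x)) ∧
    -- S̄(A+B)x = x for all x ∈ D(A) ∩ D(B),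
    (∀ x : (A + B).domain, ∃ h : (A + B) x ∈ S.closure.domain,
      S.closure ⟨(A + B) x, h⟩ = (x : X)) ∧
    -- and (A+B)S̄y = y for all y ∈ D(S̄)
    (∀ y : S.closure.domain, ∃ h : S.closure y ∈ (A + B).domain,
      (A + B) ⟨S.closure y, h⟩ = (y : X)) := by
  classical
  have hAclosed' : _root_.IsClosed (A.graph : Set (X × X)) := hAclosed
  have hBclosed' : _root_.IsClosed (B.graph : Set (X × X)) := hBclosed
  -- Step 0: bounded operators TA, TB with TA + TB = 1, TA = A∘S, TB = B∘S on D(S)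
  obtain ⟨TA, TB, hTsum, hTA, hTB⟩ :
      ∃ TA TB : X →L[ℂ] X, (∀ t : X, TA t + TB t = t) ∧
        (∀ x : S.domain, TA (x : X) = A ⟨S x, hSA x⟩) ∧
        (∀ x : S.domain, TB (x : X) = B ⟨S x, hSB x⟩) := by
    rcases hbdd with ⟨T, hT⟩ | ⟨T, hT⟩
    · refine ⟨T, 1 - T, fun t => by simp, hT, fun x => ?_⟩
      have h1 := hABS x
      have h2 : (1 - T) (x : X) = (x : X) - T (x : X) := by simp
      rw [h2, hT x, ← h1]; abel
    · refine ⟨1 - T, T, fun t => by simp, fun x => ?_, hT⟩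
      have h1 := hABS x
      have h2 : (1 - T) (x : X) = (x : X) - T (x : X) := by simp
      rw [h2, hT x, ← h1]; abel
  -- sequence extraction from the closure of the graph of S
  have hseq : ∀ p : X × X, p ∈ closure (S.graph : Set (X × X)) →
      ∃ u : ℕ → S.domain,
        Filter.Tendsto (fun n => ((u n : X))) Filter.atTop (nhds p.1) ∧
        Filter.Tendsto (fun n => S (u n)) Filter.atTop (nhds p.2) := by
    intro p hp
    obtain ⟨q, hqmem, hqlim⟩ := mem_closure_iff_seq_limit.mp hp
    choose y hy1 hy2 using fun n => S.mem_graph_iff.mp (hqmem n)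
    exact ⟨y, ((continuous_fst.tendsto p).comp hqlim).congr (fun n => (hy1 n).symm),
      ((continuous_snd.tendsto p).comp hqlim).congr (fun n => (hy2 n).symm)⟩
  -- generic: closed graph + approximating sequence in the graph gives membership
  have hgraphLim : ∀ (G : X →ₗ.[ℂ] X), _root_.IsClosed (G.graph : Set (X × X)) →
      ∀ (v w : ℕ → X) (p q : X),
      (∀ n, ∃ h : v n ∈ G.domain, G ⟨v n, h⟩ = w n) →
      Filter.Tendsto v Filter.atTop (nhds p) → Filter.Tendsto w Filter.atTop (nhds q) →
      ∃ h : p ∈ G.domain, G ⟨p, h⟩ = q := by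
    intro G hG v w p q hvw hv hw
    have hmem : ∀ n, (v n, w n) ∈ (G.graph : Set (X × X)) := fun n => by
      obtain ⟨h, he⟩ := hvw n
      exact G.mem_graph_iff.mpr ⟨⟨v n, h⟩, rfl, he⟩
    have hcl : (p, q) ∈ closure (G.graph : Set (X × X)) :=
      mem_closure_of_tendsto (hv.prodMk_nhds hw) (Filter.Eventually.of_forall hmem)
    rw [hG.closure_eq] at hcl
    obtain ⟨y, hy1, hy2⟩ := G.mem_graph_iff.mp hcl
    have hy1' : (y : X) = p := hy1
    have hy2' : G y = q := hy2
    refine ⟨hy1' ▸ y.2, ?_⟩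
    have he : (⟨p, hy1' ▸ y.2⟩ : G.domain) = y := Subtype.ext hy1'.symm
    rw [he, hy2']
  -- Step 1: S is closable
  have hclosable : S.IsClosable := by
    refine ⟨(S.graph.topologicalClosure).toLinearPMap,
      (Submodule.toLinearPMap_graph_eq _ ?_).symm⟩
    intro pq hpq h1
    have hp : pq ∈ closure (S.graph : Set (X × X)) := by
      rw [← Submodule.topologicalClosure_coe]; exact hpq
    obtain ⟨u, hu1, hu2⟩ := hseq pq hp
    have hTAlim : Filter.Tendsto (fun n => TA ((u n : X))) Filter.atTop (nhds 0) := by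
      have h := (TA.continuous.tendsto pq.1).comp hu1
      rw [h1] at h; simpa [Function.comp_def] using h
    obtain ⟨hm, he⟩ := hgraphLim A hAclosed' (fun n => (S (u n) : X))
      (fun n => TA ((u n : X))) pq.2 0
      (fun n => ⟨hSA (u n), (hTA (u n)).symm⟩) hu2 hTAlim
    exact hAinj ⟨pq.2, hm⟩ he
  set C := S.closure with hCdef
  have hCgraph : S.graph.topologicalClosure = C.graph :=
    hclosable.graph_closure_eq_closure_graph
  have hCclosed' : _root_.IsClosed (C.graph : Set (X × X)) := hclosable.closure_isClosed
  have hCseq : ∀ ζ : C.domain, ∃ u : ℕ → S.domain,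
      Filter.Tendsto (fun n => ((u n : X))) Filter.atTop (nhds (ζ : X)) ∧
      Filter.Tendsto (fun n => S (u n)) Filter.atTop (nhds (C ζ)) := by
    intro ζ
    have h : ((ζ : X), C ζ) ∈ C.graph := C.mem_graph ζ
    rw [← hCgraph] at h
    exact hseq _ (by rw [← Submodule.topologicalClosure_coe]; exact h)
  -- D(S) ⊆ D(C) and C extends S
  have hSC : ∀ x : S.domain, ∃ h : (x : X) ∈ C.domain, C ⟨(x : X), h⟩ = S x := by
    intro x
    obtain ⟨hdom, heq⟩ := S.le_closure
    exact ⟨hdom x.2, (heq (x := x) (y := ⟨(x : X), hdom x.2⟩) rfl).symm⟩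
  -- S commutes with RA and RB
  have hSRA : ∀ x : S.domain, ∃ h : RA (x : X) ∈ S.domain, S ⟨RA (x : X), h⟩ = RA (S x) :=
    hScommA lam RA hRA
  have hRBres : IsResolvent B (-lam) (-RB) := by
    have hmem : ∀ t : X, (-RB) t ∈ B.domain := fun t => by
      simpa using neg_mem (hRB.mem t)
    refine ⟨hmem, fun t => ?_, fun y => ?_⟩
    · have key : ∀ hh : (-RB) t ∈ B.domain, (-lam) • (-RB) t - B ⟨(-RB) t, hh⟩ = t := by
        intro hh
        have hsub : (⟨(-RB) t, hh⟩ : B.domain) = -⟨RB t, hRB.mem t⟩ :=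
          Subtype.ext (by simp)
        rw [hsub, B.map_neg]
        simp only [ContinuousLinearMap.neg_apply]
        calc (-lam) • -RB t - -B ⟨RB t, hRB.mem t⟩
            = lam • RB t + B ⟨RB t, hRB.mem t⟩ := by module
          _ = t := hRB.right_inv t
      exact key _
    · have h1 : (-lam) • (y : X) - B y = -(lam • (y : X) + B y) := by module
      rw [h1]
      simp only [ContinuousLinearMap.neg_apply, map_neg, neg_neg]
      exact hRB.left_inv y
  have hSRB : ∀ x : S.domain, ∃ h : RB (x : X) ∈ S.domain, S ⟨RB (x : X), h⟩ = RB (S x) := by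
    intro x
    obtain ⟨h, he⟩ := hScommB (-lam) (-RB) hRBres x
    have hmem : RB (x : X) ∈ S.domain := by
      have h2 := neg_mem h
      simpa using h2
    refine ⟨hmem, ?_⟩
    have hsub : (⟨RB (x : X), hmem⟩ : S.domain) = -⟨(-RB) (x : X), h⟩ :=
      Subtype.ext (by simp)
    rw [hsub, S.map_neg, he]
    simp
  -- C inherits commutation with RA and RB
  have hCRA : ∀ ζ : C.domain, ∃ h : RA (ζ : X) ∈ C.domain, C ⟨RA (ζ : X), h⟩ = RA (C ζ) := by
    intro ζ
    obtain ⟨u, hu1, hu2⟩ := hCseq ζ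
    refine hgraphLim C hCclosed' (fun n => RA ((u n : X))) (fun n => RA (S (u n))) _ _
      (fun n => ?_) ((RA.continuous.tendsto _).comp hu1) ((RA.continuous.tendsto _).comp hu2)
    obtain ⟨h1, e1⟩ := hSRA (u n)
    obtain ⟨h2, e2⟩ := hSC ⟨RA ((u n : X)), h1⟩
    exact ⟨h2, by rw [e2, e1]⟩
  have hCRB : ∀ ζ : C.domain, ∃ h : RB (ζ : X) ∈ C.domain, C ⟨RB (ζ : X), h⟩ = RB (C ζ) := by
    intro ζ
    obtain ⟨u, hu1, hu2⟩ := hCseq ζ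
    refine hgraphLim C hCclosed' (fun n => RB ((u n : X))) (fun n => RB (S (u n))) _ _
      (fun n => ?_) ((RB.continuous.tendsto _).comp hu1) ((RB.continuous.tendsto _).comp hu2)
    obtain ⟨h1, e1⟩ := hSRB (u n)
    obtain ⟨h2, e2⟩ := hSC ⟨RB ((u n : X)), h1⟩
    exact ⟨h2, by rw [e2, e1]⟩
  -- values of C lie in D(A) ∩ D(B), with A∘C = TA, B∘C = TB
  have hCA : ∀ ζ : C.domain, ∃ h : C ζ ∈ A.domain, A ⟨C ζ, h⟩ = TA (ζ : X) := by
    intro ζ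
    obtain ⟨u, hu1, hu2⟩ := hCseq ζ
    exact hgraphLim A hAclosed' (fun n => (S (u n) : X)) (fun n => TA ((u n : X))) _ _
      (fun n => ⟨hSA (u n), (hTA (u n)).symm⟩) hu2 ((TA.continuous.tendsto _).comp hu1)
  have hCB : ∀ ζ : C.domain, ∃ h : C ζ ∈ B.domain, B ⟨C ζ, h⟩ = TB (ζ : X) := by
    intro ζ
    obtain ⟨u, hu1, hu2⟩ := hCseq ζ
    exact hgraphLim B hBclosed' (fun n => (S (u n) : X)) (fun n => TB ((u n : X))) _ _
      (fun n => ⟨hSB (u n), (hTB (u n)).symm⟩) hu2 ((TB.continuous.tendsto _).comp hu1)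
  -- TB commutes with RB (first on the dense set D(S), then everywhere)
  have hTBRB : ∀ t : X, TB (RB t) = RB (TB t) := by
    have heq : Set.EqOn (fun t => TB (RB t)) (fun t => RB (TB t)) (S.domain : Set X) := by
      intro t ht
      obtain ⟨h, he⟩ := hSRB ⟨t, ht⟩
      have hL : TB (RB t) = S (⟨t, ht⟩ : S.domain) - lam • RB (S (⟨t, ht⟩ : S.domain)) := by
        have e1 := hTB ⟨RB t, h⟩
        have hsub : (⟨S ⟨RB t, h⟩, hSB ⟨RB t, h⟩⟩ : B.domain)
            = ⟨RB (S (⟨t, ht⟩ : S.domain)), hRB.mem _⟩ := Subtype.ext he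
        rw [e1, hsub]
        exact eq_sub_of_add_eq' (hRB.right_inv (S (⟨t, ht⟩ : S.domain)))
      have hR : RB (TB t) = S (⟨t, ht⟩ : S.domain) - lam • RB (S (⟨t, ht⟩ : S.domain)) := by
        have e1 := hTB ⟨t, ht⟩
        have e2 := hRB.left_inv ⟨S (⟨t, ht⟩ : S.domain), hSB ⟨t, ht⟩⟩
        rw [map_add, map_smul] at e2
        rw [e1]
        exact eq_sub_of_add_eq' e2
      show TB (RB t) = RB (TB t)
      rw [hL, hR]
    have hfun := Continuous.ext_on hSdense (TB.continuous.comp RB.continuous)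
      (RB.continuous.comp TB.continuous) heq
    exact fun t => congrFun hfun t
  -- hence TA commutes with RB
  have hTARB : ∀ t : X, TA (RB t) = RB (TA t) := by
    intro t
    have h1 := hTsum (RB t)
    have h2 : RB (TA t) + RB (TB t) = RB t := by rw [← map_add, hTsum t]
    rw [hTBRB t] at h1
    exact add_right_cancel (h1.trans h2.symm)
  -- Key identity: RA (RB ζ) = RA (C ζ) - RB (C ζ) for ζ ∈ D(C)
  have hC : ∀ ζ : C.domain, RA (RB (ζ : X)) = RA (C ζ) - RB (C ζ) := by
    intro ζ
    obtain ⟨hvA, eA⟩ := hCA ζ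
    obtain ⟨hvB, eB⟩ := hCB ζ
    obtain ⟨hm, hme⟩ := hCRB ζ
    obtain ⟨hm2, hme2⟩ := hCA ⟨RB (ζ : X), hm⟩
    have hRBvA : RB (C ζ) ∈ A.domain := hme ▸ hm2
    have eA2 : A ⟨RB (C ζ), hRBvA⟩ = RB (A ⟨C ζ, hvA⟩) := by
      have hsub : (⟨RB (C ζ), hRBvA⟩ : A.domain) = ⟨C ⟨RB (ζ : X), hm⟩, hm2⟩ :=
        Subtype.ext hme.symm
      rw [hsub, hme2, hTARB, eA]
    have eRBB : RB (B ⟨C ζ, hvB⟩) = C ζ - lam • RB (C ζ) := by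
      have e2 := hRB.left_inv ⟨C ζ, hvB⟩
      rw [map_add, map_smul] at e2
      exact eq_sub_of_add_eq' e2
    have ezeta : (ζ : X) = A ⟨C ζ, hvA⟩ + B ⟨C ζ, hvB⟩ := by
      rw [eA, eB, hTsum]
    have eRB : RB (ζ : X) = C ζ - (lam • RB (C ζ) - A ⟨RB (C ζ), hRBvA⟩) := by
      calc RB (ζ : X) = RB (A ⟨C ζ, hvA⟩ + B ⟨C ζ, hvB⟩) := by rw [← ezeta]
        _ = RB (A ⟨C ζ, hvA⟩) + RB (B ⟨C ζ, hvB⟩) := map_add _ _ _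
        _ = A ⟨RB (C ζ), hRBvA⟩ + (C ζ - lam • RB (C ζ)) := by rw [← eA2, eRBB]
        _ = C ζ - (lam • RB (C ζ) - A ⟨RB (C ζ), hRBvA⟩) := by abel
    have elast : RA (lam • RB (C ζ) - A ⟨RB (C ζ), hRBvA⟩) = RB (C ζ) :=
      hRA.left_inv ⟨RB (C ζ), hRBvA⟩
    rw [eRB, map_sub, elast]
  -- Crux: every RA (RB ζ), ζ ∈ D(C), is in the range of C
  have hcruxC : ∀ ζ : C.domain, ∃ p : C.domain, C p = RA (RB (ζ : X)) := by
    intro ζ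
    obtain ⟨h1, e1⟩ := hCRA ζ
    obtain ⟨h2, e2⟩ := hCRB ζ
    refine ⟨⟨RA (ζ : X) - RB (ζ : X), sub_mem h1 h2⟩, ?_⟩
    have hsub : (⟨RA (ζ : X) - RB (ζ : X), sub_mem h1 h2⟩ : C.domain)
        = ⟨RA (ζ : X), h1⟩ - ⟨RB (ζ : X), h2⟩ := Subtype.ext (by simp)
    rw [hsub, C.map_sub, e1, e2, ← hC ζ]
  -- (A+B) is a left inverse of C
  have hCtoAB : ∀ ζ : C.domain, ∃ h : C ζ ∈ (A + B).domain, (A + B) ⟨C ζ, h⟩ = (ζ : X) := by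
    intro ζ
    obtain ⟨hA', eA⟩ := hCA ζ
    obtain ⟨hB', eB⟩ := hCB ζ
    refine ⟨Submodule.mem_inf.mpr ⟨hA', hB'⟩, ?_⟩
    have hval : (A + B) ⟨C ζ, Submodule.mem_inf.mpr ⟨hA', hB'⟩⟩
        = A ⟨C ζ, hA'⟩ + B ⟨C ζ, hB'⟩ := rfl
    rw [hval, eA, eB, hTsum]
  -- Main step: C ∘ (A+B) = id on D(A+B)
  have hmain : ∀ x : (A + B).domain, ∃ h : (A + B) x ∈ C.domain,
      C ⟨(A + B) x, h⟩ = (x : X) := by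
    intro x
    obtain ⟨u, himg, hux, hABu⟩ := hcore x
    have hterm : ∀ n, ∃ h : (A + B) (u n) ∈ C.domain, C ⟨(A + B) (u n), h⟩ = ((u n : X)) := by
      intro n
      obtain ⟨z, hz, hze⟩ := himg n
      obtain ⟨p, hp⟩ := hcruxC ⟨z, hz⟩
      obtain ⟨hab, habe⟩ := hCtoAB p
      have hun : ((u n : X)) = C p := by rw [hp]; exact hze.symm
      have hunx : u n = ⟨C p, hab⟩ := Subtype.ext hun
      have hval : (A + B) (u n) = (p : X) := by rw [hunx, habe]
      refine ⟨hval ▸ p.2, ?_⟩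
      have hsub : (⟨(A + B) (u n), hval ▸ p.2⟩ : C.domain) = p := Subtype.ext hval
      rw [hsub, ← hun]
    exact hgraphLim C hCclosed' (fun n => (A + B) (u n)) (fun n => ((u n : X))) _ _
      hterm hABu hux
  -- A + B is closed
  have hABclosed : (A + B).IsClosed := by
    have hsc : IsSeqClosed ((A + B).graph : Set (X × X)) := by
      intro q p hqmem hqlim
      choose y hy1 hy2 using fun n => (A + B).mem_graph_iff.mp (hqmem n)
      have hterm : ∀ n, ∃ h : (q n).2 ∈ C.domain, C ⟨(q n).2, h⟩ = (q n).1 := by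
        intro n
        obtain ⟨h, he⟩ := hmain (y n)
        refine ⟨(hy2 n) ▸ h, ?_⟩
        have hsub : (⟨(q n).2, (hy2 n) ▸ h⟩ : C.domain) = ⟨(A + B) (y n), h⟩ :=
          Subtype.ext (hy2 n).symm
        rw [hsub, he, hy1 n]
      obtain ⟨hp2, hp2e⟩ := hgraphLim C hCclosed' (fun n => (q n).2) (fun n => (q n).1)
        p.2 p.1 hterm ((continuous_snd.tendsto p).comp hqlim)
        ((continuous_fst.tendsto p).comp hqlim)
      obtain ⟨hab, habe⟩ := hCtoAB ⟨p.2, hp2⟩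
      refine (A + B).mem_graph_iff.mpr ⟨⟨C ⟨p.2, hp2⟩, hab⟩, ?_, ?_⟩
      · exact hp2e
      · exact habe
    exact hsc.isClosed
  -- A + B is injective
  have hinj : ∀ x : (A + B).domain, (A + B) x = 0 → (x : X) = 0 := by
    intro x hx
    obtain ⟨h, he⟩ := hmain x
    rw [← he]
    have hsub : (⟨(A + B) x, h⟩ : C.domain) = 0 := Subtype.ext hx
    rw [hsub, C.map_zero]
  -- range identity
  have hrange : (C.domain : Set X) = Set.range (fun x : (A + B).domain => (A + B) x) := by
    ext t
    constructor
    · intro ht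
      obtain ⟨hab, habe⟩ := hCtoAB ⟨t, ht⟩
      exact ⟨⟨C ⟨t, ht⟩, hab⟩, habe⟩
    · rintro ⟨x, rfl⟩
      exact (hmain x).choose
  exact ⟨hclosable, hABclosed, hinj, hrange, hmain, hCtoAB⟩
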